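/- arXiv:2002.04661 — 2 statements merged into one kernel-verified Lean document; each statement's English description precedes it below -/
import Mathlib

section
/- Let (R, m, k) be a Noetherian normal local domain and let C be a finitely generated R-module satisfying Serre's condition (S₂). If M₁, ..., M_t are finitely generated rank-1 R-modules satisfying Serre's condition (S₂) that are pairwise non-isomorphic (i.e., they represent distinct elements of the divisor class group of R), and each M_i is a direct summand of C, then the direct sum M₁ ⊕ ⋯ ⊕ M_t is a direct summand of C. -/
open IsLocalRing

/-- `M` is a direct summand of `N`: there is a split injection of `M` into `N`. -/
def IsDirectSummand (R M N : Type*) [CommRing R] [AddCommGroup M] [Module R M]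
    [AddCommGroup N] [Module R N] : Prop :=
  ∃ (ι : M →ₗ[R] N) (π : N →ₗ[R] M), π ∘ₗ ι = LinearMap.id

/-- A module `M` over a Noetherian ring `R` satisfies Serre's condition `(S₂)`:
for every prime `P` of `R`, `depth_{R_P}(M_P) ≥ min(2, dim R_P)`, expressed by the
existence, for each `n ≤ min(2, dim R_P)`, of a length-`n` weakly regular sequence on
`M_P` consisting of elements of the maximal ideal of `R_P`. -/
def IsS2 (R M : Type*) [CommRing R] [AddCommGroup M] [Module R M] : Prop :=
  ∀ (P : Ideal R) [P.IsPrime], ∀ n : ℕ,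
    (n : WithBot ℕ∞) ≤ min 2 (ringKrullDim (Localization.AtPrime P)) →
    ∃ rs : List (Localization.AtPrime P), rs.length = n ∧
      (∀ x ∈ rs, x ∈ maximalIdeal (Localization.AtPrime P)) ∧
      RingTheory.Sequence.IsWeaklyRegular (LocalizedModule P.primeCompl M) rs

/-- `M` has rank `1` over the domain `R`, i.e. `dim_{Frac R} (M ⊗_R Frac R) = 1`. -/
def RankOne (R M : Type*) [CommRing R] [AddCommGroup M] [Module R M] : Prop :=
  Module.rank (FractionRing R) (LocalizedModule (nonZeroDivisors R) M) = 1

section Torsionfree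

variable {R : Type*} [CommRing R] [IsNoetherianRing R] [IsDomain R]

/-- An `(S₂)` module over a Noetherian domain is torsion-free. -/
theorem IsS2.torsion_eq_zero {N : Type*} [AddCommGroup N] [Module R N]
    (h : IsS2 R N) {r : R} (hr : r ≠ 0) {x : N} (hx : r • x = 0) : x = 0 := by
  by_contra hx0
  obtain ⟨P, hP, hannx⟩ := exists_le_isAssociatedPrime_of_isNoetherianRing R x hx0
  obtain ⟨hPrime, y, hy⟩ := isAssociatedPrime_iff.mp hP
  have hrP : r ∈ P := hannx (by rw [Submodule.bot_colon']; exact (Submodule.mem_annihilator_span_singleton x r).mpr hx)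
  have hy0 : y ≠ 0 := by
    rintro rfl
    rw [Submodule.bot_colon', Submodule.span_zero_singleton, Submodule.annihilator_bot] at hy
    exact hPrime.ne_top hy
  have hPy : ∀ p ∈ P, p • y = 0 := by
    intro p hp
    rw [hy, Submodule.bot_colon'] at hp
    exact (Submodule.mem_annihilator_span_singleton y p).mp hp
  have hPmem : ∀ p : R, p • y = 0 → p ∈ P := by
    intro p hp
    rw [hy, Submodule.bot_colon']
    exact (Submodule.mem_annihilator_span_singleton y p).mpr hp
  -- the localization at `P` has Krull dimension at least 1
  set L := Localization.AtPrime P with hL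
  have hinj : Function.Injective (algebraMap R L) :=
    IsLocalization.injective L P.primeCompl_le_nonZeroDivisors
  have hmaxbot : maximalIdeal L ≠ ⊥ := by
    intro e
    have h1 : algebraMap R L r ∈ maximalIdeal L :=
      (IsLocalization.AtPrime.to_map_mem_maximal_iff L P r).mpr hrP
    rw [e, Ideal.mem_bot] at h1
    exact hr (hinj (by simpa using h1))
  have hdim : (1 : WithBot ℕ∞) ≤ ringKrullDim L := by
    let a : PrimeSpectrum L := ⟨⊥, Ideal.bot_prime⟩
    let b : PrimeSpectrum L := ⟨maximalIdeal L, (maximalIdeal.isMaximal L).isPrime⟩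
    have hab : a < b := by
      refine lt_of_le_of_ne (show a.asIdeal ≤ b.asIdeal from bot_le) ?_
      intro e
      exact hmaxbot (congrArg PrimeSpectrum.asIdeal e).symm
    have := Order.LTSeries.length_le_krullDim ((RelSeries.singleton _ a).snoc b hab)
    have hl : ((RelSeries.singleton {x : PrimeSpectrum L × PrimeSpectrum L | x.1 < x.2} a).snoc b hab).length = 1 := rfl
    rw [hl] at this
    exact_mod_cast this
  obtain ⟨rs, hlen, hmem, hreg⟩ := h P 1 (by
    refine le_min ?_ hdim
    exact one_le_two)
  obtain ⟨a₀, rfl⟩ := List.length_eq_one_iff.mp hlen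
  have hreg' : IsSMulRegular (LocalizedModule P.primeCompl N) a₀ :=
    (RingTheory.Sequence.isWeaklyRegular_singleton_iff _ a₀).mp hreg
  obtain ⟨⟨p, s⟩, hmk⟩ := IsLocalization.mk'_surjective P.primeCompl a₀
  dsimp only at hmk
  have hpP : p ∈ P := by
    refine (IsLocalization.AtPrime.mk'_mem_maximal_iff L P p s).mp ?_
    rw [hmk]; exact hmem a₀ (by simp)
  have hkey : a₀ • LocalizedModule.mk y (1 : P.primeCompl) = 0 := by
    rw [← hmk, ← Localization.mk_eq_mk', LocalizedModule.mk_smul_mk, hPy p hpP, LocalizedModule.zero_mk]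
  have hzero : LocalizedModule.mk y (1 : P.primeCompl) = 0 := by
    apply hreg'
    show a₀ • LocalizedModule.mk y 1 = a₀ • (0 : LocalizedModule P.primeCompl N)
    rw [hkey, smul_zero]
  have : LocalizedModule.mk y (1 : P.primeCompl) = LocalizedModule.mk 0 (1 : P.primeCompl) := by
    exact hzero.trans (LocalizedModule.zero_mk 1).symm
  obtain ⟨u, hu⟩ := LocalizedModule.mk_eq.mp this
  simp only [one_smul, smul_zero] at hu
  exact u.2 (hPmem (u : R) hu)

end Torsionfree

section Scalar

variable {R : Type*} [CommRing R] [IsDomain R] [IsNoetherianRing R] [IsIntegrallyClosed R]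

/-- Every `R`-linear endomorphism of a rank-one module over `Frac R` is scalar. -/
theorem endo_scalar {V : Type*} [AddCommGroup V] [Module R V]
    [Module (FractionRing R) V] [IsScalarTower R (FractionRing R) V]
    (hrkV : Module.rank (FractionRing R) V = 1)
    (h : V →ₗ[R] V) : ∃ c : FractionRing R, ∀ v, h v = c • v := by
  obtain ⟨v₀, hv₀, hspan⟩ := rank_eq_one_iff.mp hrkV
  obtain ⟨c, hc⟩ := hspan (h v₀)
  refine ⟨c, fun v => ?_⟩
  obtain ⟨a, rfl⟩ := hspan v
  have hsm : h (a • v₀) = a • h v₀ :=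
    map_smul (h.extendScalarsOfIsLocalization (nonZeroDivisors R) (FractionRing R)) a v₀
  rw [hsm, ← hc, smul_comm]

/-- Any composite `N → N' → N` of maps between finitely generated torsion-free rank-one
modules over a Noetherian integrally closed domain is multiplication by a ring element;
moreover if that element is a unit then `N ≅ N'`. -/
theorem comp_eq_smul_id {N N' : Type*} [AddCommGroup N] [Module R N] [Module.Finite R N]
    [AddCommGroup N'] [Module R N'] [Module.Finite R N']
    (htf : ∀ (r : R) (x : N), r ≠ 0 → r • x = 0 → x = 0)
    (htf' : ∀ (r : R) (x : N'), r ≠ 0 → r • x = 0 → x = 0)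
    (hrk : RankOne R N) (hrk' : RankOne R N')
    (f : N →ₗ[R] N') (g : N' →ₗ[R] N) :
    ∃ r : R, g ∘ₗ f = r • LinearMap.id ∧ (IsUnit r → Nonempty (N ≃ₗ[R] N')) := by
  classical
  set S := nonZeroDivisors R with hS
  let K := FractionRing R
  let VN := LocalizedModule S N
  let VN' := LocalizedModule S N'
  let mkN : N →ₗ[R] VN := LocalizedModule.mkLinearMap S N
  let mkN' : N' →ₗ[R] VN' := LocalizedModule.mkLinearMap S N'
  -- injectivity of the localization maps
  have injN : Function.Injective mkN := by
    intro a b hab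
    simp only [mkN, LocalizedModule.mkLinearMap_apply] at hab
    obtain ⟨u, hu⟩ := LocalizedModule.mk_eq.mp hab
    simp only [one_smul, Submonoid.smul_def] at hu
    have : (u : R) • (a - b) = 0 := by rw [smul_sub, hu, sub_self]
    have := htf (u : R) (a - b) (nonZeroDivisors.coe_ne_zero u) this
    exact sub_eq_zero.mp this
  have injN' : Function.Injective mkN' := by
    intro a b hab
    simp only [mkN', LocalizedModule.mkLinearMap_apply] at hab
    obtain ⟨u, hu⟩ := LocalizedModule.mk_eq.mp hab
    simp only [one_smul, Submonoid.smul_def] at hu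
    have : (u : R) • (a - b) = 0 := by rw [smul_sub, hu, sub_self]
    have := htf' (u : R) (a - b) (nonZeroDivisors.coe_ne_zero u) this
    exact sub_eq_zero.mp this
  obtain ⟨v₀, hv₀, hspan⟩ := rank_eq_one_iff.mp hrk
  obtain ⟨w₀, hw₀, hwspan⟩ := rank_eq_one_iff.mp hrk'
  -- the localized composite is multiplication by some `c : K`
  set hV : VN →ₗ[R] VN := IsLocalizedModule.map S mkN mkN (g ∘ₗ f) with hVdef
  obtain ⟨c, hc⟩ := endo_scalar (R := R) (V := VN) hrk hV
  -- `c` preserves the image of `N`, hence is integral over `R`, hence lies in `R`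
  have hcR : ∃ r : R, algebraMap R K r = c := by
    apply IsIntegrallyClosed.isIntegral_iff.mp
    have hbot : LinearMap.range mkN ≠ ⊥ := by
      obtain ⟨m, s, rfl⟩ : ∃ m s, LocalizedModule.mk m s = v₀ := by
        induction v₀ using LocalizedModule.induction_on with
        | h m s => exact ⟨m, s, rfl⟩
      intro hb
      have h1 : mkN m = 0 := by
        have : mkN m ∈ LinearMap.range mkN := LinearMap.mem_range_self _ m
        rwa [hb, Submodule.mem_bot] at this
      have h2 : Localization.mk (1 : R) s • mkN m = LocalizedModule.mk m s := by
        show Localization.mk (1 : R) s • LocalizedModule.mk m 1 = LocalizedModule.mk m s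
        rw [LocalizedModule.mk_smul_mk, one_smul, mul_one]
      rw [h1, smul_zero] at h2
      exact hv₀ h2.symm
    have hfg : (LinearMap.range mkN).FG := by
      rw [LinearMap.range_eq_map]
      exact Submodule.FG.map _ (Module.Finite.fg_top)
    refine isIntegral_of_smul_mem_submodule (LinearMap.range mkN) hbot hfg c ?_
    rintro n ⟨x, rfl⟩
    refine ⟨(g ∘ₗ f) x, ?_⟩
    have := IsLocalizedModule.map_apply S mkN mkN (g ∘ₗ f) x
    rw [← hc (mkN x)]
    exact this.symm
  obtain ⟨r, hr⟩ := hcR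
  have hgf : g ∘ₗ f = r • LinearMap.id := by
    apply LinearMap.ext
    intro x
    apply injN
    have h1 : mkN ((g ∘ₗ f) x) = hV (mkN x) :=
      (IsLocalizedModule.map_apply S mkN mkN (g ∘ₗ f) x).symm
    rw [h1, hc, ← hr, algebraMap_smul]
    simp
  refine ⟨r, hgf, fun hu => ?_⟩
  -- unit case : `f` and `g` are mutually inverse up to the unit `r`
  have hr0 : r ≠ 0 := hu.ne_zero
  have hc0 : c ≠ 0 := by
    rw [← hr]
    exact (map_ne_zero_iff _ (IsFractionRing.injective R K)).mpr hr0
  set fV : VN →ₗ[R] VN' := IsLocalizedModule.map S mkN mkN' f with hfVdef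
  set gV : VN' →ₗ[R] VN := IsLocalizedModule.map S mkN' mkN g with hgVdef
  have hVcomp : hV = gV ∘ₗ fV := IsLocalizedModule.map_comp' S mkN mkN' mkN f g
  set hV' : VN' →ₗ[R] VN' := IsLocalizedModule.map S mkN' mkN' (f ∘ₗ g) with hV'def
  have hV'comp : hV' = fV ∘ₗ gV := IsLocalizedModule.map_comp' S mkN' mkN mkN' g f
  obtain ⟨c', hc'⟩ := endo_scalar (R := R) (V := VN') hrk' hV'
  -- `fV` is not identically zero
  have hfVne : ∃ w, fV w ≠ 0 := by
    by_contra hall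
    push_neg at hall
    have : hV v₀ = 0 := by rw [hVcomp]; simp [hall v₀]
    rw [hc v₀] at this
    exact (smul_ne_zero hc0 hv₀) this
  obtain ⟨w, hw⟩ := hfVne
  -- `c' = c`
  have hcc : c' = c := by
    have hKsm : fV (c • w) = c • fV w :=
      map_smul (fV.extendScalarsOfIsLocalization S K) c w
    have h1 : hV' (fV w) = fV (hV w) := by
      rw [hVcomp, hV'comp]; simp
    rw [hc' (fV w), hc w, hKsm] at h1
    exact smul_left_injective K hw h1
  have hfg' : f ∘ₗ g = r • LinearMap.id := by
    apply LinearMap.ext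
    intro x
    apply injN'
    have h1 : mkN' ((f ∘ₗ g) x) = hV' (mkN' x) :=
      (IsLocalizedModule.map_apply S mkN' mkN' (f ∘ₗ g) x).symm
    rw [h1, hc', hcc, ← hr, algebraMap_smul]
    simp
  -- build the isomorphism
  let u := hu.unit
  have hur : (u : R) = r := hu.unit_spec
  refine ⟨LinearEquiv.ofLinear f (((u⁻¹ : Rˣ) : R) • g) ?_ ?_⟩
  · rw [LinearMap.comp_smul, hfg', smul_smul, ← hur, Units.inv_mul, one_smul]
  · rw [LinearMap.smul_comp, hgf, smul_smul, ← hur, Units.inv_mul, one_smul]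

end Scalar

section Combinatorial

universe u w

variable {R : Type*} [CommRing R] [IsLocalRing R]

/-- If each `M i` is a direct summand of `C` and every composite `M i → M j → M i`
(for `i ≠ j`) is multiplication by a non-unit, then `⨁ M i` is a direct summand of `C`. -/
theorem isDirectSummand_pi_of_comp_nonunit :
    ∀ (t : ℕ) (M : Fin t → Type u) [∀ i, AddCommGroup (M i)] [∀ i, Module R (M i)]
      (C : Type w) [AddCommGroup C] [Module R C],
      (∀ i j, i ≠ j → ∀ (f : M i →ₗ[R] M j) (g : M j →ₗ[R] M i),
        ∃ r ∈ maximalIdeal R, g ∘ₗ f = r • LinearMap.id) →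
      (∀ i, IsDirectSummand R (M i) C) →
      IsDirectSummand R (∀ i, M i) C := by
  intro t
  induction t with
  | zero =>
    intro M _ _ C _ _ _ _
    haveI : Subsingleton (∀ i : Fin 0, M i) := ⟨fun a b => funext fun i => i.elim0⟩
    exact ⟨0, 0, Subsingleton.elim _ _⟩
  | succ n IH =>
    intro M _ _ C _ _ hcomp hsummand
    obtain ⟨ι₀, π₀, h₀⟩ := hsummand 0
    have h₀' : ∀ x, π₀ (ι₀ x) = x := fun x => LinearMap.congr_fun h₀ x
    set C' : Submodule R C := LinearMap.ker π₀ with hC'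
    let p : C →ₗ[R] C := LinearMap.id - ι₀ ∘ₗ π₀
    have hpmem : ∀ c, p c ∈ C' := by
      intro c
      simp only [C', LinearMap.mem_ker, p, LinearMap.sub_apply, LinearMap.id_apply,
        LinearMap.comp_apply, map_sub, h₀', sub_self]
    let q : C →ₗ[R] C' := LinearMap.codRestrict C' p hpmem
    have hqι₀ : ∀ x, q (ι₀ x) = 0 := by
      intro x
      apply Subtype.ext
      simp [q, p, h₀']
    have hqC' : ∀ w : C', q (w : C) = w := by
      intro w
      apply Subtype.ext
      have hw : π₀ (w : C) = 0 := w.2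
      simp [q, p, hw]
    -- each `M (Fin.succ j)` is a direct summand of `C'`
    have hsummand' : ∀ j : Fin n, IsDirectSummand R (M j.succ) C' := by
      intro j
      obtain ⟨ιi, πi, hi⟩ := hsummand j.succ
      obtain ⟨r, hrmem, hr⟩ := hcomp j.succ 0 (Fin.succ_ne_zero j) (π₀ ∘ₗ ιi) (πi ∘ₗ ι₀)
      have hunit : IsUnit (1 - r) :=
        IsLocalRing.isUnit_one_sub_self_of_mem_nonunits r hrmem
      let v := hunit.unit
      have hv : (v : R) = 1 - r := hunit.unit_spec
      refine ⟨q ∘ₗ ιi, ((v⁻¹ : Rˣ) : R) • (πi ∘ₗ C'.subtype), ?_⟩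
      have hkey : (πi ∘ₗ C'.subtype) ∘ₗ (q ∘ₗ ιi) = (1 - r) • LinearMap.id := by
        apply LinearMap.ext
        intro x
        have h1 : (C'.subtype ∘ₗ q) = p := rfl
        have h2 : πi (p (ιi x)) = πi (ιi x) - πi (ι₀ (π₀ (ιi x))) := by
          simp [p]
        have h3 : πi (ιi x) = x := LinearMap.congr_fun hi x
        have h4 : πi (ι₀ (π₀ (ιi x))) = r • x := by
          have := LinearMap.congr_fun hr x
          simpa using this
        show πi ((C'.subtype ∘ₗ q) (ιi x)) = (1 - r) • x
        rw [h1, h2, h3, h4, sub_smul, one_smul]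
      rw [LinearMap.smul_comp, hkey, smul_smul, ← hv, Units.inv_mul, one_smul]
    obtain ⟨ιt, πt, ht⟩ := IH (fun j => M j.succ) C'
      (fun i j hij f g => hcomp i.succ j.succ (fun e => hij (Fin.succ_injective n e)) f g)
      hsummand'
    -- assemble the full splitting
    let tail : (∀ i, M i) →ₗ[R] (∀ j : Fin n, M j.succ) :=
      LinearMap.pi (fun j => LinearMap.proj j.succ)
    let ι : (∀ i, M i) →ₗ[R] C :=
      ι₀ ∘ₗ LinearMap.proj 0 + C'.subtype ∘ₗ ιt ∘ₗ tail
    let π : C →ₗ[R] (∀ i, M i) :=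
      LinearMap.pi (fun i => Fin.cases (motive := fun i => C →ₗ[R] M i) π₀
        (fun j => LinearMap.proj j ∘ₗ πt ∘ₗ q) i)
    refine ⟨ι, π, ?_⟩
    apply LinearMap.ext
    intro m
    funext i
    have hπ₀tail : π₀ ((C'.subtype ∘ₗ ιt ∘ₗ tail) m) = 0 := (ιt (tail m)).2
    have hqι : q (ι m) = ιt (tail m) := by
      have : q (ι m) = q (ι₀ (m 0)) + q ((ιt (tail m) : C)) := by
        simp only [ι, LinearMap.add_apply, LinearMap.comp_apply, map_add]
        rfl
      rw [this, hqι₀, hqC', zero_add]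
    induction i using Fin.cases with
    | zero =>
      show π₀ (ι m) = m 0
      have : π₀ (ι m) = π₀ (ι₀ (m 0)) + π₀ ((C'.subtype ∘ₗ ιt ∘ₗ tail) m) := by
        simp only [ι, LinearMap.add_apply, map_add]
        rfl
      rw [this, h₀', hπ₀tail, add_zero]
    | succ j =>
      show (πt (q (ι m))) j = m j.succ
      rw [hqι]
      have h5 : πt (ιt (tail m)) = tail m := LinearMap.congr_fun ht (tail m)
      rw [h5]
      rfl

end Combinatorial

/-- Over a Noetherian normal local domain, if `M₁, …, M_t` are pairwise non-isomorphic
finitely generated rank-one `(S₂)` modules, each of which is a direct summand of a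
finitely generated `(S₂)` module `C`, then `M₁ ⊕ ⋯ ⊕ M_t` is a direct summand of `C`. -/
theorem directSum_of_pairwise_nonisomorphic_rank_one_summands
    (R : Type*) [CommRing R] [IsNoetherianRing R] [IsLocalRing R] [IsDomain R]
    [IsIntegrallyClosed R]
    (C : Type*) [AddCommGroup C] [Module R C] [Module.Finite R C] (hC : IsS2 R C)
    (t : ℕ) (M : Fin t → Type*)
    [∀ i, AddCommGroup (M i)] [∀ i, Module R (M i)] [∀ i, Module.Finite R (M i)]
    (hrk : ∀ i, RankOne R (M i)) (hS2 : ∀ i, IsS2 R (M i))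
    (hdistinct : ∀ i j, i ≠ j → ¬ Nonempty (M i ≃ₗ[R] M j))
    (hsummand : ∀ i, IsDirectSummand R (M i) C) :
    IsDirectSummand R (∀ i, M i) C := by
  have htf : ∀ i, ∀ (r : R) (x : M i), r ≠ 0 → r • x = 0 → x = 0 :=
    fun i r x hr hx => (hS2 i).torsion_eq_zero hr hx
  apply isDirectSummand_pi_of_comp_nonunit t M C ?_ hsummand
  intro i j hij f g
  obtain ⟨r, hgf, hiso⟩ := comp_eq_smul_id (htf i) (htf j) (hrk i) (hrk j) f g
  refine ⟨r, ?_, hgf⟩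
  rw [IsLocalRing.mem_maximalIdeal, mem_nonunits_iff]
  intro hu
  exact (hdistinct i j hij) (hiso hu)
end

section
/- Let (R, m, k) be a Noetherian local F-finite strongly F-regular ring of prime characteristic p > 0 and let M be a finitely generated torsion-free R-module. Then ⋂_{e ∈ ℕ} I_e(M) = 0, where I_e(M) = {η ∈ M : φ(F^e_* η) ∈ m for every R-linear map φ : F^e_* M → R}. -/
open IsLocalRing

/-- An `R`-linear map `F^e_* M → R`, encoded as an additive map `φ : M → R`
satisfying `φ ((r ^ p ^ e) • m) = r * φ m` for all `r : R`, `m : M`. -/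
def IsFrobeniusLinearMap {R : Type*} (M : Type*) [CommRing R] [AddCommGroup M]
    [Module R M] (p e : ℕ) (φ : M → R) : Prop :=
  (∀ x y : M, φ (x + y) = φ x + φ y) ∧
    ∀ (r : R) (m : M), φ (r ^ p ^ e • m) = r * φ m

/-- `R` is `F`-finite: `R` is a finitely generated module over itself via the
Frobenius endomorphism `r ↦ r ^ p`. -/
def FFinite (R : Type*) [CommRing R] (p : ℕ) : Prop :=
  ∃ s : Finset R, ∀ r : R, ∃ c : R → R, r = ∑ a ∈ s, c a ^ p * a

/-- `R` is strongly `F`-regular: for every nonzero `r : R` there are `e : ℕ` and an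
`R`-linear map `φ : F^e_* R → R` with `φ (F^e_* r) = 1`. -/
def StronglyFRegular (R : Type*) [CommRing R] (p : ℕ) : Prop :=
  ∀ r : R, r ≠ 0 → ∃ (e : ℕ) (φ : R → R), IsFrobeniusLinearMap R p e φ ∧ φ r = 1



lemma exists_linearMap_ne_zero
    {R : Type*} [CommRing R] [IsDomain R]
    (M : Type*) [AddCommGroup M] [Module R M] [Module.Finite R M]
    (htf : ∀ (r : R) (x : M), r • x = 0 → r = 0 ∨ x = 0)
    (η : M) (hη : η ≠ 0) : ∃ φ : M →ₗ[R] R, φ η ≠ 0 := by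
  classical
  set S := nonZeroDivisors R
  set K := FractionRing R
  have hmk : LocalizedModule.mkLinearMap S M η ≠ 0 := by
    intro h0
    rw [IsLocalizedModule.eq_zero_iff S] at h0
    obtain ⟨s, hs⟩ := h0
    rcases htf s η hs with h | h
    · exact nonZeroDivisors.ne_zero s.2 h
    · exact hη h
  obtain ⟨f, hf⟩ : ∃ f : Module.Dual K (LocalizedModule S M),
      f (LocalizedModule.mkLinearMap S M η) ≠ 0 := by
    by_contra h
    push_neg at h
    exact hmk ((Module.forall_dual_apply_eq_zero_iff K _).mp h)
  let g : M →ₗ[R] K := (f.restrictScalars R) ∘ₗ LocalizedModule.mkLinearMap S M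
  obtain ⟨t, ht⟩ := Module.Finite.fg_top (R := R) (M := M)
  obtain ⟨b, hb⟩ := IsLocalization.exist_integer_multiples S t (fun m : M => g m)
  set N : Submodule R K := LinearMap.range (Algebra.linearMap R K)
  have key : ∀ m : M, ((b : R) • g) m ∈ N := by
    have hle : Submodule.span R (t : Set M) ≤ Submodule.comap ((b : R) • g) N := by
      rw [Submodule.span_le]
      intro i hi
      obtain ⟨r, hr⟩ := hb i hi
      exact ⟨r, by simpa [Algebra.smul_def] using hr⟩
    intro m
    have : m ∈ Submodule.span R (t : Set M) := ht ▸ Submodule.mem_top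
    exact hle this
  have hinj : Function.Injective (Algebra.linearMap R K) :=
    IsFractionRing.injective R K
  let e := LinearEquiv.ofInjective (Algebra.linearMap R K) hinj
  refine ⟨e.symm ∘ₗ LinearMap.codRestrict N ((b : R) • g) key, ?_⟩
  intro h0
  rw [LinearMap.comp_apply] at h0
  have hx : LinearMap.codRestrict N ((b : R) • g) key η = 0 :=
    e.symm.map_eq_zero_iff.mp h0
  have : ((b : R) • g) η = 0 := by
    simpa using congrArg Subtype.val hx
  have hb0 : algebraMap R K (b : R) ≠ 0 := by
    intro h
    exact nonZeroDivisors.ne_zero b.2 (hinj (by simpa using h))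
  have hgη : g η ≠ 0 := hf
  rw [LinearMap.smul_apply, Algebra.smul_def] at this
  exact (mul_ne_zero hb0 hgη) this

/-- For a Noetherian local `F`-finite strongly `F`-regular ring `R` of prime
characteristic `p > 0` and a finitely generated torsion-free `R`-module `M`, the
intersection `⋂_{e ∈ ℕ} I_e(M)` is zero, where
`I_e(M) = {η ∈ M : φ (F^e_* η) ∈ m for every R-linear φ : F^e_* M → R}`. -/
theorem iInter_frobenius_splitting_submodule_eq_bot
    (R : Type*) [CommRing R] [IsNoetherianRing R] [IsLocalRing R]
    (p : ℕ) (hp : p.Prime) [CharP R p]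
    (hFF : FFinite R p) (hSFR : StronglyFRegular R p)
    (M : Type*) [AddCommGroup M] [Module R M] [Module.Finite R M]
    (htf : ∀ (r : R) (x : M), r • x = 0 → r = 0 ∨ x = 0) :
    (⋂ e : ℕ, {η : M | ∀ φ : M → R, IsFrobeniusLinearMap M p e φ →
      φ η ∈ IsLocalRing.maximalIdeal R}) = {0} := by
  apply Set.eq_of_subset_of_subset
  · intro η hη
    simp only [Set.mem_iInter, Set.mem_setOf_eq] at hη
    rw [Set.mem_singleton_iff]
    by_contra hne
    -- torsion-freeness with η ≠ 0 forces R to be a domain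
    haveI : NoZeroDivisors R := by
      constructor
      intro a b hab
      have h1 : a • (b • η) = 0 := by
        rw [← mul_smul, hab, zero_smul]
      rcases htf a (b • η) h1 with h | h
      · exact Or.inl h
      · rcases htf b η h with h' | h'
        · exact Or.inr h'
        · exact absurd h' hne
    haveI : IsDomain R := NoZeroDivisors.to_isDomain R
    obtain ⟨φ₀, hφ₀⟩ := exists_linearMap_ne_zero M htf η hne
    obtain ⟨e, ψ, ⟨ψadd, ψfrob⟩, hψ1⟩ := hSFR (φ₀ η) hφ₀
    have hlin : IsFrobeniusLinearMap M p e (fun m : M => ψ (φ₀ m)) := by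
      refine ⟨fun x y => ?_, fun r m => ?_⟩
      · simp only [map_add, ψadd]
      · have h1 : φ₀ (r ^ p ^ e • m) = r ^ p ^ e • φ₀ m := map_smul φ₀ _ _
        show ψ (φ₀ (r ^ p ^ e • m)) = r * ψ (φ₀ m)
        rw [h1, smul_eq_mul, ← smul_eq_mul, ψfrob]
    have hmem := hη e (fun m : M => ψ (φ₀ m)) hlin
    simp only [hψ1] at hmem
    exact (IsLocalRing.maximalIdeal.isMaximal R).ne_top
      ((Ideal.eq_top_iff_one _).mpr hmem)
  · intro η hη
    rw [Set.mem_singleton_iff] at hη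
    subst hη
    simp only [Set.mem_iInter, Set.mem_setOf_eq]
    intro e φ hφ
    have h0 : φ 0 = 0 := by
      have h := hφ.1 0 0
      rw [add_zero] at h
      exact (left_eq_add.mp h)
    rw [h0]
    exact Submodule.zero_mem _
end
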